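/- Let (X,d,μ) be a connected, complete, locally compact, separable geodesic metric measure space satisfying (VD_loc), let G⊆X be a maximal 1-separated set with graph structure x∼y iff x≠y and d(x,y)≤3 and weights ν_{xy}=μ(A_{xy}), ν_x=Σ_yν_{xy}. Then there is c₁>0, depending only on the constant in (VD_loc), such that for every nonnegative f:G→ℝ, every A⊆G, and A'={y∈G: d_G(y,A)≤4}: Σ_{z∈A} V₄f(z)²·ν_z ≤ c₁·Σ_{y,z∈A'} (f(y)−f(z))²·ν_{yz}. -/

import Mathlib

open MeasureTheory
open scoped Classical ENNReal

noncomputable section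

/-- A metric space is geodesic if any two points are joined by an isometrically
parametrized path. -/
def IsGeodesicSpace (X : Type*) [MetricSpace X] : Prop :=
  ∀ x y : X, ∃ γ : ℝ → X, γ 0 = x ∧ γ (dist x y) = y ∧
    ∀ s ∈ Set.Icc (0 : ℝ) (dist x y), ∀ t ∈ Set.Icc (0 : ℝ) (dist x y),
      dist (γ s) (γ t) = |s - t|

/-- `G` is a maximal 1-separated subset of `X`. -/
def MaximalSeparated {X : Type*} [MetricSpace X] (G : Set X) : Prop :=
  (∀ x ∈ G, ∀ y ∈ G, x ≠ y → 1 ≤ dist x y) ∧ ∀ z : X, ∃ x ∈ G, dist z x < 1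

/-- The net graph on `G ⊆ X`: vertices are points of `G`, with `x ∼ y` iff `x ≠ y`
and `d(x,y) ≤ 3`. -/
def netGraph {X : Type*} [MetricSpace X] (G : Set X) : SimpleGraph G where
  Adj x y := x ≠ y ∧ dist (x : X) (y : X) ≤ 3
  symm := ⟨fun x y h => ⟨h.1.symm, by rw [dist_comm]; exact h.2⟩⟩
  loopless := ⟨fun x h => h.1 rfl⟩

/-- The edge weight `ν_{xy} = μ(A_{xy})` where `A_{xy} = B(z_{xy},5/2)` and `z_{xy}`
is the chosen midpoint of a geodesic from `x` to `y`; zero for non-adjacent pairs. -/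
def netNuE {X : Type*} [MetricSpace X] [MeasurableSpace X] (μ : Measure X)
    (G : Set X) (z : X → X → X) (x y : G) : ℝ≥0∞ :=
  if (netGraph G).Adj x y then μ (Metric.ball (z (x : X) (y : X)) (5 / 2)) else 0

/-- The vertex weight `ν_x = Σ_{y ∼ x} ν_{xy}`. -/
def netNuV {X : Type*} [MetricSpace X] [MeasurableSpace X] (μ : Measure X)
    (G : Set X) (z : X → X → X) (x : G) : ℝ≥0∞ :=
  ∑' y : G, netNuE μ G z x y

/-- `A_x = ⋃_{y ∼ x} A_{xy}`. -/
def netA {X : Type*} [MetricSpace X] (G : Set X) (z : X → X → X) (x : G) : Set X :=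
  ⋃ y ∈ (netGraph G).neighborSet x, Metric.ball (z (x : X) (y : X)) (5 / 2)

/-- `f̃ = Σ_{x ∈ G} f(x) ψ_x`, the transfer of `f : G → ℝ` to `X` via the partition
of unity `ψ`. -/
def netTilde {X : Type*} [MetricSpace X] (G : Set X) (ψ : G → X → ℝ)
    (f : G → ℝ) (w : X) : ℝ :=
  ∑' x : G, f x * ψ x w

/-- `V_k f(x) = sup {|f(x) - f(z)| : d_G(z,x) ≤ k}`. -/
def netV {X : Type*} [MetricSpace X] (G : Set X) (k : ℕ) (f : G → ℝ) (x : G) : ℝ :=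
  ⨆ y : {y : G // (netGraph G).dist x y ≤ k}, |f x - f (y : G)|

end


namespace NetAux

open Metric MeasureTheory
open scoped ENNReal

variable {X : Type*} [MetricSpace X]

lemma exists_maximal_sep (ε : ℝ) (hε : 0 < ε) :
    ∃ H : Set X, (∀ a ∈ H, ∀ b ∈ H, a ≠ b → ε ≤ dist a b) ∧
      ∀ z : X, ∃ q ∈ H, dist z q < ε := by
  have hchainarg : ∀ c ⊆ {S : Set X | ∀ a ∈ S, ∀ b ∈ S, a ≠ b → ε ≤ dist a b},
      IsChain (· ⊆ ·) c → ∃ ub ∈ {S : Set X | ∀ a ∈ S, ∀ b ∈ S, a ≠ b → ε ≤ dist a b},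
        ∀ s ∈ c, s ⊆ ub := by
    intro c hc hchain
    refine ⟨⋃₀ c, ?_, fun s hs => Set.subset_sUnion_of_mem hs⟩
    intro a ha b hb hab
    obtain ⟨s, hs, has⟩ := ha
    obtain ⟨t, ht, hbt⟩ := hb
    rcases hchain.total hs ht with h | h
    · exact hc ht a (h has) b hbt hab
    · exact hc hs a has b (h hbt) hab
  obtain ⟨H, hH⟩ := zorn_subset {S : Set X | ∀ a ∈ S, ∀ b ∈ S, a ≠ b → ε ≤ dist a b} hchainarg
  · refine ⟨H, hH.prop, fun w => ?_⟩
    by_contra hcon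
    push_neg at hcon
    have hw : w ∉ H := fun hwH => absurd (hcon w hwH) (by simp [hε])
    have hmem : (insert w H) ∈ {S : Set X | ∀ a ∈ S, ∀ b ∈ S, a ≠ b → ε ≤ dist a b} := by
      intro a ha b hb hab
      rcases ha with rfl | ha
      · rcases hb with rfl | hb
        · exact absurd rfl hab
        · exact hcon b hb
      · rcases hb with rfl | hb
        · rw [dist_comm]; exact hcon a ha
        · exact hH.prop a ha b hb hab
    have := hH.2 hmem (Set.subset_insert w H) (Set.mem_insert w H)
    exact hw this

variable [MeasurableSpace X] {μ : Measure X} {L : ℝ≥0∞}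

/-- local doubling -/
def Dbl (μ : Measure X) (L : ℝ≥0∞) : Prop :=
  ∀ (x : X) (R : ℝ), 0 < R → R ≤ 1 → μ (ball x (2 * R)) ≤ L * μ (ball x R)

lemma dbl_step (hdbl : Dbl μ L) {r : ℝ} (hr0 : 0 < r) (hr : r ≤ 1) {p q : X}
    (h : dist p q ≤ r) : μ (ball q r) ≤ L * μ (ball p r) := by
  refine le_trans (measure_mono ?_) (hdbl p r hr0 hr)
  refine ball_subset_ball' ?_
  rw [dist_comm]
  linarith

lemma dbl_halve (hdbl : Dbl μ L) : ∀ (n : ℕ) (x : X) (s : ℝ), 0 < s → s ≤ 2 →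
    μ (ball x s) ≤ L ^ n * μ (ball x (s / 2 ^ n)) := by
  intro n
  induction n with
  | zero => intro x s _ _; simp
  | succ n ih =>
    intro x s hs0 hs2
    have h1 : μ (ball x s) ≤ L * μ (ball x (s / 2)) := by
      have := hdbl x (s / 2) (by linarith) (by linarith)
      rw [mul_div_cancel₀ s (by norm_num : (2:ℝ) ≠ 0)] at this
      exact this
    have h2 := ih x (s / 2) (by linarith) (by linarith)
    calc μ (ball x s) ≤ L * μ (ball x (s / 2)) := h1
      _ ≤ L * (L ^ n * μ (ball x (s / 2 / 2 ^ n))) := by exact mul_le_mul_right h2 L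
      _ = L ^ (n + 1) * μ (ball x (s / 2 ^ (n + 1))) := by
          rw [div_div, ← pow_succ']
          ring

lemma ball_le (hdbl : Dbl μ L) {x : X} {s t : ℝ} (n : ℕ) (hst : s ≤ 2)
    (h : s ≤ 2 ^ n * t) : μ (ball x s) ≤ L ^ n * μ (ball x t) := by
  rcases le_or_gt s 0 with hs | hs
  · rw [ball_eq_empty.2 hs]
    simp
  · refine le_trans (dbl_halve hdbl n x s hs hst) ?_
    refine mul_le_mul_right (measure_mono (ball_subset_ball ?_)) _
    rw [div_le_iff₀ (by positivity)]
    linarith [h, (by positivity : (0:ℝ) < 2 ^ n)]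

/-- comparison of small balls at nearby centers, via geodesics -/
lemma comp_core (hgeo : IsGeodesicSpace X) (hL : 1 ≤ L) (hdbl : Dbl μ L) :
    ∀ (n : ℕ) (p q : X), dist p q ≤ n / 16 →
      μ (ball q (1 / 16)) ≤ L ^ n * μ (ball p (1 / 16)) := by
  intro n
  induction n with
  | zero =>
    intro p q h
    have : p = q := by
      rw [← dist_le_zero]
      simpa using h
    subst this; simp
  | succ n ih =>
    intro p q h
    rcases le_or_gt (dist p q) (1 / 16) with hd | hd
    · refine le_trans (dbl_step hdbl (by norm_num) (by norm_num) hd) ?_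
      refine mul_le_mul_left ?_ _
      calc L = L ^ 1 := (pow_one L).symm
        _ ≤ L ^ (n + 1) := pow_le_pow_right₀ hL (by omega)
    · obtain ⟨γ, hγ0, hγd, hγ⟩ := hgeo p q
      set d := dist p q with hdd
      have hd0 : 0 ≤ d := dist_nonneg
      have hmem1 : d - 1/16 ∈ Set.Icc (0:ℝ) d := ⟨by linarith, by linarith⟩
      have hmem0 : (0:ℝ) ∈ Set.Icc (0:ℝ) d := ⟨le_refl _, hd0⟩
      have hmemd : d ∈ Set.Icc (0:ℝ) d := ⟨hd0, le_refl _⟩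
      set m := γ (d - 1/16) with hm
      have hpm : dist p m = d - 1/16 := by
        have := hγ 0 hmem0 (d - 1/16) hmem1
        rw [hγ0] at this
        rw [this]
        rw [abs_of_nonpos (by linarith)]
        ring
      have hmq : dist m q = 1/16 := by
        have := hγ (d - 1/16) hmem1 d hmemd
        rw [hγd] at this
        rw [this, abs_of_nonpos (by linarith)]
        ring
      have h1 : μ (ball q (1/16)) ≤ L * μ (ball m (1/16)) :=
        dbl_step hdbl (by norm_num) (by norm_num) (le_of_eq hmq)
      have h2 : μ (ball m (1/16)) ≤ L ^ n * μ (ball p (1/16)) := by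
        refine ih p m ?_
        rw [hpm]
        push_cast at h ⊢
        linarith
      calc μ (ball q (1/16)) ≤ L * (L ^ n * μ (ball p (1/16))) :=
            le_trans h1 (mul_le_mul_right h2 L)
        _ = L ^ (n+1) * μ (ball p (1/16)) := by rw [← mul_assoc, ← pow_succ']

lemma finset_bound {S : Set X} {B : ℝ≥0∞} (hB : B ≠ ⊤)
    (h : ∀ F : Finset X, ↑F ⊆ S → (F.card : ℝ≥0∞) ≤ B) :
    S.Finite ∧ (S.ncard : ℝ≥0∞) ≤ B := by
  have hfin : S.Finite := by
    by_contra hinf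
    have hinf' : S.Infinite := hinf
    obtain ⟨F, hFS, hFcard⟩ := hinf'.exists_subset_card_eq (⌊B.toReal⌋₊ + 1)
    have h1 := h F hFS
    have h2 : (F.card : ℝ) ≤ B.toReal := by
      have := ENNReal.toReal_mono hB h1
      simpa using this
    rw [hFcard] at h2
    push_cast at h2
    have := Nat.lt_floor_add_one B.toReal
    linarith
  refine ⟨hfin, ?_⟩
  have := h hfin.toFinset (by simp)
  rwa [Set.ncard_eq_toFinset_card S hfin]

section Count

variable [OpensMeasurableSpace X]
variable (hpos : ∀ (x : X) (r : ℝ), 0 < r → 0 < μ (Metric.ball x r))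
  (hfin : ∀ (x : X) (r : ℝ), 0 < r → μ (Metric.ball x r) < ⊤)
  (hL : 1 ≤ L) (hLtop : L ≠ ⊤) (hdbl : Dbl μ L) (hgeo : IsGeodesicSpace X)
  {H : Set X} (hsep : ∀ a ∈ H, ∀ b ∈ H, a ≠ b → 1/8 ≤ dist a b)
  (hdns : ∀ z : X, ∃ q ∈ H, dist z q < 1/8)

include hpos hfin hL hLtop hdbl hgeo hsep in
lemma count_halfball (p : X) :
    (H ∩ ball p (9/16)).Finite ∧ ((H ∩ ball p (9/16)).ncard : ℝ≥0∞) ≤ L ^ 13 := by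
  refine finset_bound (by exact ENNReal.pow_ne_top hLtop) ?_
  intro F hFS
  have hdisj : (↑F : Set X).PairwiseDisjoint (fun q => ball q (1/16)) := by
    intro a ha b hb hab
    have := hsep a (hFS ha).1 b (hFS hb).1 hab
    exact Metric.ball_disjoint_ball (by linarith)
  have hmeas : ∀ b ∈ F, MeasurableSet (ball b (1/16)) := fun b _ => measurableSet_ball
  have hsum : ∑ q ∈ F, μ (ball q (1/16)) ≤ μ (ball p (10/16)) := by
    rw [← measure_biUnion_finset hdisj hmeas]
    refine measure_mono ?_
    refine Set.iUnion₂_subset fun q hq => ball_subset_ball' ?_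
    have := (hFS hq).2
    rw [mem_ball] at this
    linarith
  have hcompl : ∀ q ∈ F, μ (ball p (1/16)) ≤ L ^ 9 * μ (ball q (1/16)) := by
    intro q hq
    refine comp_core hgeo hL hdbl 9 q p ?_
    have := (hFS hq).2
    rw [mem_ball] at this
    push_cast
    linarith
  have hkey : (F.card : ℝ≥0∞) * μ (ball p (1/16)) ≤ L ^ 13 * μ (ball p (1/16)) := by
    calc (F.card : ℝ≥0∞) * μ (ball p (1/16)) = ∑ _q ∈ F, μ (ball p (1/16)) := by
          rw [Finset.sum_const, nsmul_eq_mul]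
      _ ≤ ∑ q ∈ F, L ^ 9 * μ (ball q (1/16)) := Finset.sum_le_sum hcompl
      _ = L ^ 9 * ∑ q ∈ F, μ (ball q (1/16)) := by rw [Finset.mul_sum]
      _ ≤ L ^ 9 * μ (ball p (10/16)) := mul_le_mul_right hsum _
      _ ≤ L ^ 9 * (L ^ 4 * μ (ball p (1/16))) := by
          refine mul_le_mul_right (ball_le hdbl 4 (by norm_num) (by norm_num)) _
      _ = L ^ 13 * μ (ball p (1/16)) := by rw [← mul_assoc, ← pow_add]
  have h0 : μ (ball p (1/16)) ≠ 0 := (hpos p (1/16) (by norm_num)).ne'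
  have htop : μ (ball p (1/16)) ≠ ⊤ := (hfin p (1/16) (by norm_num)).ne
  exact (ENNReal.mul_le_mul_iff_left h0 htop).1 hkey

include hpos hfin hL hLtop hdbl hgeo hsep hdns in
lemma count_quarter : ∀ (n : ℕ) (p : X),
    (H ∩ ball p (n/4)).Finite ∧ ((H ∩ ball p (n/4)).ncard : ℝ≥0∞) ≤ (L ^ 13 + 1) ^ n := by
  intro n
  induction n with
  | zero =>
    intro p
    have : H ∩ ball p ((0:ℕ)/4) = ∅ := by
      simp [ball_eq_empty.2 (by norm_num : ((0:ℕ):ℝ)/4 ≤ 0)]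
    rw [this]
    simp
  | succ n ih =>
    intro p
    have hmain : ∃ T : Finset X, (↑T : Set X) ⊆ H ∧ (T.card : ℝ≥0∞) ≤ (L ^ 13 + 1) ^ n ∧
        H ∩ ball p (((n+1 : ℕ) : ℝ)/4) ⊆ ⋃ q ∈ T, H ∩ ball q (9/16) := by
      rcases Nat.eq_zero_or_pos n with rfl | hn
      · obtain ⟨q, hqH, hq⟩ := hdns p
        refine ⟨{q}, by simpa using hqH, by simp, ?_⟩
        rintro g ⟨hgH, hg⟩
        rw [mem_ball] at hg
        refine Set.mem_biUnion (Finset.mem_singleton_self q) ⟨hgH, ?_⟩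
        rw [mem_ball]
        calc dist g q ≤ dist g p + dist p q := dist_triangle _ _ _
          _ < 9/16 := by push_cast at hg; linarith
      · obtain ⟨hfinn, hcardn⟩ := ih p
        refine ⟨hfinn.toFinset, ?_, ?_, ?_⟩
        · intro q hq
          exact ((hfinn.mem_toFinset).1 hq).1
        · rw [← Set.ncard_eq_toFinset_card _ hfinn]
          exact hcardn
        · rintro g ⟨hgH, hg⟩
          rw [mem_ball] at hg
          obtain ⟨γ, hγ0, hγd, hγ⟩ := hgeo p g
          have hd0 : 0 ≤ dist p g := dist_nonneg
          have hub : dist p g < ((n+1 : ℕ) : ℝ)/4 := by rw [dist_comm]; exact hg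
          have hmemt : max (dist p g - 3/8) 0 ∈ Set.Icc (0:ℝ) (dist p g) := by
            constructor
            · exact le_max_right _ _
            · rcases le_total (dist p g - 3/8) 0 with h | h
              · rw [max_eq_right h]; exact hd0
              · rw [max_eq_left h]; linarith
          have hmem0 : (0:ℝ) ∈ Set.Icc (0:ℝ) (dist p g) := ⟨le_refl _, hd0⟩
          have hmemd : dist p g ∈ Set.Icc (0:ℝ) (dist p g) := ⟨hd0, le_refl _⟩
          have hpm : dist p (γ (max (dist p g - 3/8) 0)) = max (dist p g - 3/8) 0 := by
            have h := hγ 0 hmem0 _ hmemt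
            rw [hγ0] at h
            rw [h, abs_of_nonpos (by simp)]
            ring
          have hmg : dist (γ (max (dist p g - 3/8) 0)) g = dist p g - max (dist p g - 3/8) 0 := by
            have h := hγ _ hmemt (dist p g) hmemd
            rw [hγd] at h
            rw [h, abs_of_nonpos (sub_nonpos.2 hmemt.2)]
            ring
          obtain ⟨q, hqH, hqm⟩ := hdns (γ (max (dist p g - 3/8) 0))
          have hM0 : (0:ℝ) ≤ max (dist p g - 3/8) 0 := le_max_right _ _
          have hone : (1:ℝ) ≤ n := by exact_mod_cast hn
          have hub' : dist p g < ((n:ℝ) + 1) / 4 := by push_cast at hub; linarith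
          have hMlt : max (dist p g - 3/8) 0 + 1/8 ≤ (n:ℝ)/4 := by
            rcases le_total (dist p g - 3/8) 0 with h | h
            · have hh := max_eq_right (a := dist p g - 3/8) (b := (0:ℝ)) h
              rw [hh]; linarith
            · have hh := max_eq_left (a := dist p g - 3/8) (b := (0:ℝ)) h
              rw [hh]; linarith
          have hMg : dist p g - max (dist p g - 3/8) 0 ≤ 7/16 := by
            rcases le_total (dist p g - 3/8) 0 with h | h
            · have hh := max_eq_right (a := dist p g - 3/8) (b := (0:ℝ)) h
              rw [hh]; linarith
            · have hh := max_eq_left (a := dist p g - 3/8) (b := (0:ℝ)) h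
              rw [hh]; linarith
          have hqSn : q ∈ hfinn.toFinset := by
            rw [hfinn.mem_toFinset]
            refine ⟨hqH, ?_⟩
            rw [mem_ball]
            have h1 : dist q p ≤ dist q (γ (max (dist p g - 3/8) 0)) + dist (γ (max (dist p g - 3/8) 0)) p :=
              dist_triangle _ _ _
            rw [dist_comm (γ (max (dist p g - 3/8) 0)) p, hpm] at h1
            have hqm' : dist q (γ (max (dist p g - 3/8) 0)) < 1/8 := by
              rw [dist_comm]; exact hqm
            linarith
          refine Set.mem_biUnion hqSn ⟨hgH, ?_⟩
          rw [mem_ball]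
          have h2 : dist g q ≤ dist g (γ (max (dist p g - 3/8) 0)) + dist (γ (max (dist p g - 3/8) 0)) q :=
            dist_triangle _ _ _
          rw [dist_comm g (γ (max (dist p g - 3/8) 0)), hmg] at h2
          have hqm' : dist (γ (max (dist p g - 3/8) 0)) q < 1/8 := hqm
          linarith
    obtain ⟨T, hTH, hTcard, hcover⟩ := hmain
    have hfineach : ∀ q, (H ∩ ball q (9/16)).Finite :=
      fun q => (count_halfball hpos hfin hL hLtop hdbl hgeo hsep q).1
    classical
    set bigF : Finset X := T.biUnion (fun q => (hfineach q).toFinset) with hbigF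
    have hcover' : H ∩ ball p (((n+1:ℕ):ℝ)/4) ⊆ ↑bigF := by
      refine hcover.trans ?_
      intro x hx
      rw [Set.mem_iUnion₂] at hx
      obtain ⟨q, hq, hxq⟩ := hx
      rw [hbigF, Finset.coe_biUnion]
      exact Set.mem_biUnion hq (by rw [Set.Finite.coe_toFinset]; exact hxq)
    constructor
    · exact bigF.finite_toSet.subset hcover'
    · have h1 : (H ∩ ball p (((n+1:ℕ):ℝ)/4)).ncard ≤ bigF.card := by
        rw [← Set.ncard_coe_finset bigF]
        exact Set.ncard_le_ncard hcover' bigF.finite_toSet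
      have h2 : bigF.card ≤ ∑ q ∈ T, ((hfineach q).toFinset).card := Finset.card_biUnion_le
      calc ((H ∩ ball p (((n+1:ℕ):ℝ)/4)).ncard : ℝ≥0∞) ≤ (bigF.card : ℝ≥0∞) := by exact_mod_cast h1
        _ ≤ ((∑ q ∈ T, ((hfineach q).toFinset).card : ℕ) : ℝ≥0∞) := by exact_mod_cast h2
        _ = ∑ q ∈ T, (((hfineach q).toFinset).card : ℝ≥0∞) := by push_cast; rfl
        _ ≤ ∑ _q ∈ T, L ^ 13 := by
            refine Finset.sum_le_sum fun q _ => ?_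
            rw [← Set.ncard_eq_toFinset_card _ (hfineach q)]
            exact (count_halfball hpos hfin hL hLtop hdbl hgeo hsep q).2
        _ = (T.card : ℝ≥0∞) * L ^ 13 := by rw [Finset.sum_const, nsmul_eq_mul]
        _ ≤ (L ^ 13 + 1) ^ n * (L ^ 13 + 1) := mul_le_mul' hTcard le_self_add
        _ = (L ^ 13 + 1) ^ (n + 1) := by rw [← pow_succ]

include hpos hfin hL hLtop hdbl hgeo hsep hdns in
lemma countH (D : ℝ) (p : X) :
    (H ∩ ball p D).Finite ∧ ((H ∩ ball p D).ncard : ℝ≥0∞) ≤ (L ^ 13 + 1) ^ (⌈4*D⌉₊) := by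
  have hsub : H ∩ ball p D ⊆ H ∩ ball p ((⌈4*D⌉₊ : ℝ)/4) := by
    refine Set.inter_subset_inter_right _ (ball_subset_ball ?_)
    have := Nat.le_ceil (4*D)
    linarith
  obtain ⟨hf, hc⟩ := count_quarter hpos hfin hL hLtop hdbl hgeo hsep hdns (⌈4*D⌉₊) p
  refine ⟨hf.subset hsub, ?_⟩
  refine le_trans ?_ hc
  exact_mod_cast Set.ncard_le_ncard hsub hf

include hpos hfin hL hLtop hdbl hgeo hsep hdns in
lemma countG {GS : Set X} (hGsep : ∀ a ∈ GS, ∀ b ∈ GS, a ≠ b → 1 ≤ dist a b)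
    (D : ℝ) (p : X) :
    (GS ∩ ball p D).Finite ∧
      ((GS ∩ ball p D).ncard : ℝ≥0∞) ≤ (L ^ 13 + 1) ^ (⌈4*(D+1)⌉₊) := by
  classical
  have hdns' := hdns
  choose Φ hΦH hΦd using hdns'
  have hinj : Set.InjOn Φ (GS ∩ ball p D) := by
    intro a ha b hb hab
    by_contra hne
    have h1 := hGsep a ha.1 b hb.1 hne
    have h2 := dist_triangle a (Φ a) b
    have h5 : dist (Φ a) b = dist (Φ b) b := by rw [hab]
    have h3 := hΦd a
    have h4 := hΦd b
    rw [dist_comm b (Φ b)] at h4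
    linarith
  have himg : Φ '' (GS ∩ ball p D) ⊆ H ∩ ball p (D + 1/8) := by
    rintro _ ⟨g, hg, rfl⟩
    refine ⟨hΦH g, ?_⟩
    have hgd : dist g p < D := mem_ball.1 hg.2
    rw [mem_ball]
    calc dist (Φ g) p ≤ dist (Φ g) g + dist g p := dist_triangle _ _ _
      _ < D + 1/8 := by
          have := hΦd g
          rw [dist_comm g (Φ g)] at this
          linarith
  obtain ⟨hf, hc⟩ := countH hpos hfin hL hLtop hdbl hgeo hsep hdns (D + 1/8) p
  have hfin2 : (GS ∩ ball p D).Finite :=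
    Set.Finite.of_finite_image (hf.subset himg) hinj
  refine ⟨hfin2, ?_⟩
  have h1 : (GS ∩ ball p D).ncard = (Φ '' (GS ∩ ball p D)).ncard :=
    (Set.ncard_image_of_injOn hinj).symm
  have h2 : (Φ '' (GS ∩ ball p D)).ncard ≤ (H ∩ ball p (D + 1/8)).ncard :=
    Set.ncard_le_ncard himg hf
  have h3 : (⌈4*(D+1/8)⌉₊ : ℕ) ≤ ⌈4*(D+1)⌉₊ := Nat.ceil_le_ceil (by linarith)
  calc ((GS ∩ ball p D).ncard : ℝ≥0∞) ≤ ((H ∩ ball p (D + 1/8)).ncard : ℝ≥0∞) := by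
        rw [h1]; exact_mod_cast h2
    _ ≤ (L ^ 13 + 1) ^ (⌈4*(D+1/8)⌉₊) := hc
    _ ≤ (L ^ 13 + 1) ^ (⌈4*(D+1)⌉₊) := pow_le_pow_right₀ le_add_self h3

include hpos hfin hL hLtop hdbl hgeo hsep hdns in
lemma vol_quarter (n : ℕ) (p : X) :
    μ (ball p ((n:ℝ)/4)) ≤ (L ^ 13 + 1) ^ (n+1) * (L ^ (4*(n+1)) * (L * μ (ball p (1/16)))) := by
  obtain ⟨hf, hc⟩ := count_quarter hpos hfin hL hLtop hdbl hgeo hsep hdns (n+1) p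
  have hcover : ball p ((n:ℝ)/4) ⊆ ⋃ q ∈ hf.toFinset, ball q (1/8) := by
    intro x hx
    obtain ⟨q, hqH, hqd⟩ := hdns x
    have hq : q ∈ hf.toFinset := by
      rw [hf.mem_toFinset]
      refine ⟨hqH, ?_⟩
      rw [mem_ball] at hx ⊢
      calc dist q p ≤ dist q x + dist x p := dist_triangle _ _ _
        _ < ((n:ℕ)+1 : ℕ)/4 := by
            rw [dist_comm q x]
            push_cast
            linarith
    refine Set.mem_biUnion hq ?_
    rw [mem_ball]
    exact hqd
  have h1 : μ (ball p ((n:ℝ)/4)) ≤ ∑ q ∈ hf.toFinset, μ (ball q (1/8)) :=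
    le_trans (measure_mono hcover) (measure_biUnion_finset_le _ _)
  have h2 : ∀ q ∈ hf.toFinset, μ (ball q (1/8)) ≤ L ^ (4*(n+1)) * (L * μ (ball p (1/16))) := by
    intro q hq
    have ha : μ (ball q (1/8)) ≤ L * μ (ball q (1/16)) := by
      have := ball_le (μ := μ) (x := q) (s := (1/8:ℝ)) (t := (1/16:ℝ)) hdbl 1 (by norm_num)
        (by norm_num)
      simpa using this
    have hb : μ (ball q (1/16)) ≤ L ^ (4*(n+1)) * μ (ball p (1/16)) := by
      refine comp_core hgeo hL hdbl (4*(n+1)) p q ?_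
      rw [hf.mem_toFinset, Set.mem_inter_iff, mem_ball] at hq
      rw [dist_comm]
      have := hq.2
      push_cast at this ⊢
      linarith
    calc μ (ball q (1/8)) ≤ L * μ (ball q (1/16)) := ha
      _ ≤ L * (L ^ (4*(n+1)) * μ (ball p (1/16))) := mul_le_mul_right hb _
      _ = L ^ (4*(n+1)) * (L * μ (ball p (1/16))) := by ring
  calc μ (ball p ((n:ℝ)/4)) ≤ ∑ q ∈ hf.toFinset, μ (ball q (1/8)) := h1
    _ ≤ ∑ _q ∈ hf.toFinset, L ^ (4*(n+1)) * (L * μ (ball p (1/16))) := Finset.sum_le_sum h2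
    _ = (hf.toFinset.card : ℝ≥0∞) * (L ^ (4*(n+1)) * (L * μ (ball p (1/16)))) := by
        rw [Finset.sum_const, nsmul_eq_mul]
    _ ≤ (L ^ 13 + 1) ^ (n+1) * (L ^ (4*(n+1)) * (L * μ (ball p (1/16)))) := by
        refine mul_le_mul_left ?_ _
        rw [← Set.ncard_eq_toFinset_card _ hf]
        exact hc

end Count

section Graph

variable {G : Set X} (hG : MaximalSeparated G)

lemma walk_dist {x y : G} (p : (netGraph G).Walk x y) :
    dist (x:X) (y:X) ≤ 3 * p.length := by
  induction p with
  | nil => simp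
  | @cons u v w h q ih =>
    calc dist (u:X) (w:X) ≤ dist (u:X) (v:X) + dist (v:X) (w:X) := dist_triangle _ _ _
      _ ≤ 3 + 3 * q.length := add_le_add h.2 ih
      _ = 3 * (q.length + 1) := by ring
      _ = 3 * (SimpleGraph.Walk.cons h q).length := by
          rw [SimpleGraph.Walk.length_cons]
          push_cast
          ring

include hG in
lemma reach (hgeo : IsGeodesicSpace X) :
    ∀ (n : ℕ) (x y : G), dist (x:X) (y:X) ≤ n + 2 →
      ∃ p : (netGraph G).Walk x y, p.length ≤ n + 1 := by
  intro n
  induction n with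
  | zero =>
    intro x y hd
    by_cases hxy : x = y
    · subst hxy
      exact ⟨SimpleGraph.Walk.nil, by simp⟩
    · have hadj : (netGraph G).Adj x y := ⟨hxy, by norm_num at hd; linarith⟩
      exact ⟨hadj.toWalk, by simp⟩
  | succ n ih =>
    intro x y hd
    by_cases hxy : x = y
    · subst hxy
      exact ⟨SimpleGraph.Walk.nil, by simp⟩
    by_cases hd3 : dist (x:X) (y:X) ≤ 3
    · have hadj : (netGraph G).Adj x y := ⟨hxy, hd3⟩
      exact ⟨hadj.toWalk, by simp⟩
    push_neg at hd3
    obtain ⟨γ, hγ0, hγd, hγ⟩ := hgeo (x:X) (y:X)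
    have hd0 : (0:ℝ) ≤ dist (x:X) (y:X) := dist_nonneg
    have hmem1 : dist (x:X) (y:X) - 2 ∈ Set.Icc (0:ℝ) (dist (x:X) (y:X)) :=
      ⟨by linarith, by linarith⟩
    have hmem0 : (0:ℝ) ∈ Set.Icc (0:ℝ) (dist (x:X) (y:X)) := ⟨le_refl _, hd0⟩
    have hmemd : dist (x:X) (y:X) ∈ Set.Icc (0:ℝ) (dist (x:X) (y:X)) := ⟨hd0, le_refl _⟩
    have hxm : dist (x:X) (γ (dist (x:X) (y:X) - 2)) = dist (x:X) (y:X) - 2 := by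
      have h := hγ 0 hmem0 _ hmem1
      rw [hγ0] at h
      rw [h, abs_of_nonpos (by linarith)]
      ring
    have hmy : dist (γ (dist (x:X) (y:X) - 2)) (y:X) = 2 := by
      have h := hγ _ hmem1 _ hmemd
      rw [hγd] at h
      rw [h, abs_of_nonpos (by linarith)]
      ring
    obtain ⟨g, hgG, hgd⟩ := hG.2 (γ (dist (x:X) (y:X) - 2))
    set g' : G := ⟨g, hgG⟩ with hg'
    have hxg : dist (x:X) (g'.1 : X) ≤ n + 2 := by
      calc dist (x:X) (g:X) ≤ dist (x:X) (γ (dist (x:X) (y:X) - 2)) + dist (γ (dist (x:X) (y:X) - 2)) g :=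
            dist_triangle _ _ _
        _ ≤ (dist (x:X) (y:X) - 2) + 1 := by
            rw [hxm]
            have : dist (γ (dist (x:X) (y:X) - 2)) g < 1 := hgd
            linarith
        _ ≤ n + 2 := by push_cast at hd ⊢; linarith
    obtain ⟨p, hp⟩ := ih x g' hxg
    have hgy : dist (g : X) (y:X) < 3 := by
      calc dist (g:X) (y:X) ≤ dist (g:X) (γ (dist (x:X) (y:X) - 2)) + dist (γ (dist (x:X) (y:X) - 2)) (y:X) :=
            dist_triangle _ _ _
        _ < 1 + 2 := by
            rw [hmy]
            have : dist (γ (dist (x:X) (y:X) - 2)) g < 1 := hgd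
            rw [dist_comm] at this
            linarith
        _ = 3 := by norm_num
    by_cases hgy' : g' = y
    · subst hgy'
      exact ⟨p, by omega⟩
    · have hadj : (netGraph G).Adj g' y := ⟨hgy', le_of_lt hgy⟩
      refine ⟨p.concat hadj, ?_⟩
      rw [SimpleGraph.Walk.length_concat]
      omega

include hG in
lemma reachable_all (hgeo : IsGeodesicSpace X) (x y : G) : (netGraph G).Reachable x y := by
  obtain ⟨p, _⟩ := reach hG hgeo (⌈dist (x:X) (y:X)⌉₊) x y
    (le_trans (Nat.le_ceil _) (by push_cast; linarith))
  exact ⟨p⟩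

include hG in
lemma metric_le_graphdist (hgeo : IsGeodesicSpace X) (x y : G) :
    dist (x:X) (y:X) ≤ 3 * ((netGraph G).dist x y : ℝ) := by
  obtain ⟨p, hp⟩ := (reachable_all hG hgeo x y).exists_walk_length_eq_dist
  calc dist (x:X) (y:X) ≤ 3 * (p.length : ℝ) := walk_dist p
    _ = 3 * ((netGraph G).dist x y : ℝ) := by rw [hp]

end Graph

section Net

variable [OpensMeasurableSpace X]
variable (hpos : ∀ (x : X) (r : ℝ), 0 < r → 0 < μ (Metric.ball x r))
  (hfin : ∀ (x : X) (r : ℝ), 0 < r → μ (Metric.ball x r) < ⊤)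
  (hL : 1 ≤ L) (hLtop : L ≠ ⊤) (hdbl : Dbl μ L) (hgeo : IsGeodesicSpace X)
  {H : Set X} (hsep : ∀ a ∈ H, ∀ b ∈ H, a ≠ b → 1/8 ≤ dist a b)
  (hdns : ∀ z : X, ∃ q ∈ H, dist z q < 1/8)
  {G : Set X} (hG : MaximalSeparated G)

include hpos hfin hL hLtop hdbl hgeo hsep hdns hG in
lemma graphBall (x : G) (k : ℕ) :
    {y : G | (netGraph G).dist x y ≤ k}.Finite ∧
      ({y : G | (netGraph G).dist x y ≤ k}.ncard : ℝ≥0∞) ≤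
        (L ^ 13 + 1) ^ (⌈4*((3*(k:ℝ)+1)+1)⌉₊) := by
  have hsub : (fun y : G => (y : X)) '' {y : G | (netGraph G).dist x y ≤ k}
      ⊆ G ∩ ball (x:X) (3*(k:ℝ)+1) := by
    rintro _ ⟨y, hy, rfl⟩
    refine ⟨y.2, ?_⟩
    rw [mem_ball]
    have h1 := metric_le_graphdist hG hgeo x y
    have h2 : ((netGraph G).dist x y : ℝ) ≤ (k : ℝ) := by exact_mod_cast hy
    rw [dist_comm]
    nlinarith
  obtain ⟨hf, hc⟩ := countG hpos hfin hL hLtop hdbl hgeo hsep hdns hG.1 (3*(k:ℝ)+1) x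
  have hinj : Set.InjOn (fun y : G => (y : X)) {y : G | (netGraph G).dist x y ≤ k} :=
    Subtype.val_injective.injOn
  have hfin2 : {y : G | (netGraph G).dist x y ≤ k}.Finite :=
    Set.Finite.of_finite_image (hf.subset hsub) hinj
  refine ⟨hfin2, ?_⟩
  have h1 : {y : G | (netGraph G).dist x y ≤ k}.ncard
      = ((fun y : G => (y : X)) '' {y : G | (netGraph G).dist x y ≤ k}).ncard :=
    (Set.ncard_image_of_injOn hinj).symm
  have h2 := Set.ncard_le_ncard hsub hf
  calc ({y : G | (netGraph G).dist x y ≤ k}.ncard : ℝ≥0∞)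
      ≤ ((G ∩ ball (x:X) (3*(k:ℝ)+1)).ncard : ℝ≥0∞) := by rw [h1]; exact_mod_cast h2
    _ ≤ (L ^ 13 + 1) ^ (⌈4*((3*(k:ℝ)+1)+1)⌉₊) := hc

include hpos hfin hL hLtop hdbl hgeo hsep hdns hG in
lemma netV_exists (f : G → ℝ) (x : G) :
    ∃ y : G, (netGraph G).dist x y ≤ 4 ∧ netV G 4 f x = |f x - f y| := by
  have hfin4 := (graphBall hpos hfin hL hLtop hdbl hgeo hsep hdns hG x 4).1
  haveI hS : Finite {y : G // (netGraph G).dist x y ≤ 4} := hfin4.to_subtype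
  haveI : Nonempty {y : G // (netGraph G).dist x y ≤ 4} :=
    ⟨⟨x, by simp [SimpleGraph.dist_self]⟩⟩
  obtain ⟨y₀, hy₀⟩ := Finite.exists_max (fun y : {y : G // (netGraph G).dist x y ≤ 4} =>
    |f x - f (y : G)|)
  refine ⟨y₀.1, y₀.2, ?_⟩
  unfold netV
  refine le_antisymm (ciSup_le hy₀) ?_
  exact le_ciSup (f := fun y : {y : G // (netGraph G).dist x y ≤ 4} => |f x - f (y : G)|)
    (Set.Finite.bddAbove (Set.finite_range _)) y₀

variable (z : X → X → X)
  (hz : ∀ x y : G, (netGraph G).Adj x y →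
    dist (x : X) (z (x : X) (y : X)) = dist (x : X) (y : X) / 2 ∧
      dist (z (x : X) (y : X)) (y : X) = dist (x : X) (y : X) / 2)

/-- upper bound constant for vertex weights -/
noncomputable def CV (L : ℝ≥0∞) : ℝ≥0∞ := (L ^ 13 + 1) ^ 18 * ((L ^ 13 + 1) ^ 17 * (L ^ 68 * L))

include hpos hfin hL hLtop hdbl hgeo hsep hdns hG hz in
lemma nuV_le (w : G) :
    netNuV μ G z w ≤ CV L * μ (ball (w:X) (1/16)) := by
  classical
  set S : Set G := {y : G | (y : X) ∈ ball (w:X) (7/2)} with hSdef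
  have hsub : (fun y : G => (y : X)) '' S ⊆ G ∩ ball (w:X) (7/2) := by
    rintro _ ⟨y, hy, rfl⟩
    exact ⟨y.2, hy⟩
  obtain ⟨hf, hc⟩ := countG hpos hfin hL hLtop hdbl hgeo hsep hdns hG.1 (7/2) (w:X)
  have hinj : Set.InjOn (fun y : G => (y : X)) S := Subtype.val_injective.injOn
  have hfinS : S.Finite := Set.Finite.of_finite_image (hf.subset hsub) hinj
  have hcardS : (S.ncard : ℝ≥0∞) ≤ (L ^ 13 + 1) ^ 18 := by
    have h1 : S.ncard = ((fun y : G => (y : X)) '' S).ncard := (Set.ncard_image_of_injOn hinj).symm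
    have h2 := Set.ncard_le_ncard hsub hf
    have h3 : (⌈4*((7:ℝ)/2+1)⌉₊ : ℕ) = 18 := by norm_num
    calc (S.ncard : ℝ≥0∞) ≤ ((G ∩ ball (w:X) (7/2)).ncard : ℝ≥0∞) := by
          rw [h1]; exact_mod_cast h2
      _ ≤ (L ^ 13 + 1) ^ (⌈4*((7:ℝ)/2+1)⌉₊) := hc
      _ = (L ^ 13 + 1) ^ 18 := by rw [h3]
  have hzero : ∀ y : G, y ∉ hfinS.toFinset → netNuE μ G z w y = 0 := by
    intro y hy
    rw [netNuE, if_neg]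
    intro hadj
    refine hy ?_
    rw [hfinS.mem_toFinset]
    show (y:X) ∈ ball (w:X) (7/2)
    rw [mem_ball, dist_comm]
    calc dist (w:X) (y:X) ≤ 3 := hadj.2
      _ < 7/2 := by norm_num
  have hterm : ∀ y ∈ hfinS.toFinset, netNuE μ G z w y ≤ μ (ball (w:X) 4) := by
    intro y _
    rw [netNuE]
    split_ifs with hadj
    · refine measure_mono (ball_subset_ball' ?_)
      have h1 := (hz w y hadj).1
      have h2 : dist (w:X) (y:X) ≤ 3 := hadj.2
      rw [dist_comm (z (w:X) (y:X)) (w:X)]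
      linarith
    · simp
  have hvol : μ (ball (w:X) 4) ≤ (L ^ 13 + 1) ^ 17 * (L ^ 68 * (L * μ (ball (w:X) (1/16)))) := by
    have := vol_quarter hpos hfin hL hLtop hdbl hgeo hsep hdns 16 (w:X)
    norm_num at this ⊢
    exact this
  calc netNuV μ G z w = ∑ y ∈ hfinS.toFinset, netNuE μ G z w y := tsum_eq_sum hzero
    _ ≤ ∑ _y ∈ hfinS.toFinset, μ (ball (w:X) 4) := Finset.sum_le_sum hterm
    _ = (hfinS.toFinset.card : ℝ≥0∞) * μ (ball (w:X) 4) := by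
        rw [Finset.sum_const, nsmul_eq_mul]
    _ ≤ (L ^ 13 + 1) ^ 18 * ((L ^ 13 + 1) ^ 17 * (L ^ 68 * (L * μ (ball (w:X) (1/16))))) := by
        refine mul_le_mul' ?_ hvol
        rw [← Set.ncard_eq_toFinset_card _ hfinS]
        exact hcardS
    _ = CV L * μ (ball (w:X) (1/16)) := by rw [CV]; ring
include hpos hfin hL hLtop hdbl hgeo hsep hdns hG hz in
lemma core_le_nuE (w p q : G) (hadj : (netGraph G).Adj p q)
    (hwp : dist (w:X) (p:X) ≤ 12) :
    μ (ball (w:X) (1/16)) ≤ L ^ 216 * netNuE μ G z p q := by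
  have h1 := (hz p q hadj).1
  have h2 : dist (p:X) (q:X) ≤ 3 := hadj.2
  have hwz : dist (z (p:X) (q:X)) (w:X) ≤ 216/16 := by
    calc dist (z (p:X) (q:X)) (w:X) ≤ dist (z (p:X) (q:X)) (p:X) + dist (p:X) (w:X) :=
          dist_triangle _ _ _
      _ ≤ 3/2 + 12 := by
          rw [dist_comm (z (p:X) (q:X)) (p:X), dist_comm (p:X) (w:X)]
          linarith
      _ ≤ 216/16 := by norm_num
  have h3 : μ (ball (w:X) (1/16)) ≤ L ^ 216 * μ (ball (z (p:X) (q:X)) (1/16)) := by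
    refine comp_core hgeo hL hdbl 216 (z (p:X) (q:X)) (w:X) ?_
    push_cast
    linarith
  refine le_trans h3 (mul_le_mul_right ?_ _)
  rw [netNuE, if_pos hadj]
  exact measure_mono (ball_subset_ball (by norm_num))

include hpos hfin hL hLtop hdbl hgeo hsep hdns hG hz in
lemma nuV_le_nuE (w p q : G) (hadj : (netGraph G).Adj p q)
    (hwp : dist (w:X) (p:X) ≤ 12) :
    netNuV μ G z w ≤ CV L * L ^ 216 * netNuE μ G z p q := by
  calc netNuV μ G z w ≤ CV L * μ (ball (w:X) (1/16)) :=
        nuV_le hpos hfin hL hLtop hdbl hgeo hsep hdns hG z hz w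
    _ ≤ CV L * (L ^ 216 * netNuE μ G z p q) :=
        mul_le_mul_right (core_le_nuE hpos hfin hL hLtop hdbl hgeo hsep hdns hG z hz w p q hadj hwp) _
    _ = CV L * L ^ 216 * netNuE μ G z p q := by rw [mul_assoc]

end Net

lemma tsum_comp_le {α β : Type*} (t : β → ℝ≥0∞) (e : α → β) (M : ℕ)
    (h : ∀ b : β, (e ⁻¹' {b}).Finite ∧ (e ⁻¹' {b}).ncard ≤ M) :
    ∑' a, t (e a) ≤ M * ∑' b, t b := by
  rw [← ENNReal.tsum_fiberwise (fun a => t (e a)) e, ← ENNReal.tsum_mul_left]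
  refine ENNReal.tsum_le_tsum fun b => ?_
  have hcongr : ∀ a : e ⁻¹' {b}, t (e (a : α)) = t b := fun a => by
    have : e (a : α) = b := a.2
    rw [this]
  classical
  haveI := (h b).1.fintype
  calc (∑' a : e ⁻¹' {b}, t (e (a : α))) = ∑' _a : e ⁻¹' {b}, t b := tsum_congr hcongr
    _ = ∑ _a : e ⁻¹' {b}, t b := tsum_fintype _
    _ = (Fintype.card (e ⁻¹' {b}) : ℝ≥0∞) * t b := by
        rw [Finset.sum_const, nsmul_eq_mul, Finset.card_univ]
    _ ≤ (M : ℝ≥0∞) * t b := by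
        refine mul_le_mul_left ?_ _
        have h1 : Fintype.card (e ⁻¹' {b}) = (e ⁻¹' {b}).ncard := by
          rw [Set.ncard_eq_toFinset_card', Set.toFinset_card]
        rw [h1]
        exact_mod_cast (h b).2

section Main

variable [OpensMeasurableSpace X]
variable (hpos : ∀ (x : X) (r : ℝ), 0 < r → 0 < μ (Metric.ball x r))
  (hfin : ∀ (x : X) (r : ℝ), 0 < r → μ (Metric.ball x r) < ⊤)
  (hL : 1 ≤ L) (hLtop : L ≠ ⊤) (hdbl : Dbl μ L) (hgeo : IsGeodesicSpace X)
  {H : Set X} (hsep : ∀ a ∈ H, ∀ b ∈ H, a ≠ b → 1/8 ≤ dist a b)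
  (hdns : ∀ z : X, ∃ q ∈ H, dist z q < 1/8)
  {G : Set X} (hG : MaximalSeparated G)
  (z : X → X → X)
  (hz : ∀ x y : G, (netGraph G).Adj x y →
    dist (x : X) (z (x : X) (y : X)) = dist (x : X) (y : X) / 2 ∧
      dist (z (x : X) (y : X)) (y : X) = dist (x : X) (y : X) / 2)

include hpos hfin hL hLtop hdbl hgeo hsep hdns hG hz in
lemma key_point (f : G → ℝ) (P : Set G) (w : G)
    (hP : ∀ y : G, (netGraph G).dist y w ≤ 4 → y ∈ P) :
    ∃ E : ℕ → (↥P × ↥P),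
      (∀ i, (netGraph G).dist ((E i).1 : G) w ≤ 4) ∧
      ENNReal.ofReal ((netV G 4 f w)^2) * netNuV μ G z w ≤
        ∑ i ∈ Finset.range 4, ENNReal.ofReal 4 * (CV L * L ^ 216) *
          (ENNReal.ofReal ((f ((E i).1 : G) - f ((E i).2 : G))^2) *
            netNuE μ G z ((E i).1 : G) ((E i).2 : G)) := by
  classical
  obtain ⟨y, hy4, hVeq⟩ := netV_exists hpos hfin hL hLtop hdbl hgeo hsep hdns hG f w
  obtain ⟨pwalk, hplen⟩ := (reachable_all hG hgeo w y).exists_walk_length_eq_dist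
  set m := (netGraph G).dist w y with hmdef
  have hm4 : m ≤ 4 := hy4
  set a : ℕ → G := pwalk.getVert with ha
  have ha0 : a 0 = w := pwalk.getVert_zero
  have ham : a m = y := by rw [ha, ← hplen]; exact pwalk.getVert_length
  -- prefix walks
  have hpre : ∀ i : ℕ, ∃ q : (netGraph G).Walk w (a i), q.length ≤ i := by
    intro i
    induction i with
    | zero => exact ⟨SimpleGraph.Walk.nil.copy rfl ha0.symm, by simp⟩
    | succ i ih =>
      obtain ⟨q, hq⟩ := ih
      by_cases hi : i < pwalk.length
      · exact ⟨q.concat (pwalk.adj_getVert_succ hi), by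
          rw [SimpleGraph.Walk.length_concat]; omega⟩
      · push_neg at hi
        have he : a i = a (i+1) := by
          rw [ha, pwalk.getVert_of_length_le hi, pwalk.getVert_of_length_le (by omega)]
        exact ⟨q.copy rfl he, by rw [SimpleGraph.Walk.length_copy]; omega⟩
  have hdistpre : ∀ i : ℕ, (netGraph G).dist w (a i) ≤ i := by
    intro i
    obtain ⟨q, hq⟩ := hpre i
    exact le_trans (SimpleGraph.dist_le q) hq
  -- memberships
  have hmemP : ∀ i : ℕ, i ≤ 4 → a i ∈ P := by
    intro i hi
    refine hP (a i) ?_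
    rw [SimpleGraph.dist_comm]
    exact le_trans (hdistpre i) hi
  have hyP : y ∈ P := by
    refine hP y ?_
    rw [SimpleGraph.dist_comm]
    exact hy4
  have hmem_i : ∀ i, i < m → a i ∈ P := fun i h => hmemP i (by omega)
  have hmem_i1 : ∀ i, i < m → a (i+1) ∈ P := fun i h => hmemP (i+1) (by omega)
  set E : ℕ → (↥P × ↥P) := fun i =>
    if h : i < m then (⟨a i, hmem_i i h⟩, ⟨a (i+1), hmem_i1 i h⟩)
    else (⟨y, hyP⟩, ⟨y, hyP⟩) with hE
  have hEpos : ∀ i (h : i < m), E i = (⟨a i, hmem_i i h⟩, ⟨a (i+1), hmem_i1 i h⟩) := by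
    intro i h
    rw [hE]
    simp only [dif_pos h]
  have hEneg : ∀ i, ¬ (i < m) → E i = (⟨y, hyP⟩, ⟨y, hyP⟩) := by
    intro i h
    rw [hE]
    simp only [dif_neg h]
  refine ⟨E, ?_, ?_⟩
  · intro i
    by_cases h : i < m
    · rw [hEpos i h]
      have := le_trans (hdistpre i) (by omega : i ≤ 4)
      simpa [SimpleGraph.dist_comm] using this
    · rw [hEneg i h]
      simpa [SimpleGraph.dist_comm] using hy4
  -- main inequality
  have htele : f w - f y = ∑ i ∈ Finset.range m, (f (a i) - f (a (i+1))) := by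
    rw [Finset.sum_range_sub' (fun i => f (a i)) m, ha0, ham]
  have hsumsq : (0:ℝ) ≤ ∑ i ∈ Finset.range m, (f (a i) - f (a (i+1)))^2 :=
    Finset.sum_nonneg fun i _ => sq_nonneg _
  have hcs : (f w - f y)^2 ≤ 4 * ∑ i ∈ Finset.range m, (f (a i) - f (a (i+1)))^2 := by
    have h := Finset.sum_mul_sq_le_sq_mul_sq (Finset.range m)
      (fun i => f (a i) - f (a (i+1))) (fun _ => (1:ℝ))
    simp only [mul_one, one_pow] at h
    rw [htele]
    have hm4' : (Finset.range m).card ≤ 4 := by simpa using hm4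
    have hcard : (∑ _i ∈ Finset.range m, (1:ℝ)) ≤ 4 := by
      rw [Finset.sum_const, nsmul_eq_mul, mul_one]
      exact_mod_cast hm4'
    nlinarith [h, hsumsq]
  have hofreal : ENNReal.ofReal ((netV G 4 f w)^2) ≤
      ∑ i ∈ Finset.range m, ENNReal.ofReal (4 * (f (a i) - f (a (i+1)))^2) := by
    rw [hVeq, sq_abs]
    calc ENNReal.ofReal ((f w - f y)^2)
        ≤ ENNReal.ofReal (∑ i ∈ Finset.range m, 4 * (f (a i) - f (a (i+1)))^2) := by
          refine ENNReal.ofReal_le_ofReal ?_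
          rw [← Finset.mul_sum]
          exact hcs
      _ = ∑ i ∈ Finset.range m, ENNReal.ofReal (4 * (f (a i) - f (a (i+1)))^2) :=
          ENNReal.ofReal_sum_of_nonneg fun i _ => by positivity
  have hedge : ∀ i ∈ Finset.range m,
      ENNReal.ofReal (4 * (f (a i) - f (a (i+1)))^2) * netNuV μ G z w ≤
        ENNReal.ofReal 4 * (CV L * L ^ 216) *
          (ENNReal.ofReal ((f ((E i).1 : G) - f ((E i).2 : G))^2) *
            netNuE μ G z ((E i).1 : G) ((E i).2 : G)) := by
    intro i hi
    rw [Finset.mem_range] at hi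
    have hilen : i < pwalk.length := by omega
    have hadj : (netGraph G).Adj (a i) (a (i+1)) := pwalk.adj_getVert_succ hilen
    have hwp : dist (w:X) ((a i : G) : X) ≤ 12 := by
      have h1 := metric_le_graphdist hG hgeo w (a i)
      have h2 : ((netGraph G).dist w (a i) : ℝ) ≤ 3 := by
        exact_mod_cast le_trans (hdistpre i) (by omega : i ≤ 3)
      nlinarith
    have hnu := nuV_le_nuE hpos hfin hL hLtop hdbl hgeo hsep hdns hG z hz w (a i) (a (i+1)) hadj hwp
    rw [hEpos i hi]
    simp only
    rw [ENNReal.ofReal_mul (by norm_num : (0:ℝ) ≤ 4)]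
    calc ENNReal.ofReal 4 * ENNReal.ofReal ((f (a i) - f (a (i+1)))^2) * netNuV μ G z w
        ≤ ENNReal.ofReal 4 * ENNReal.ofReal ((f (a i) - f (a (i+1)))^2) *
          (CV L * L ^ 216 * netNuE μ G z (a i) (a (i+1))) := mul_le_mul_right hnu _
      _ = ENNReal.ofReal 4 * (CV L * L ^ 216) *
          (ENNReal.ofReal ((f (a i) - f (a (i+1)))^2) * netNuE μ G z (a i) (a (i+1))) := by
          ring
  calc ENNReal.ofReal ((netV G 4 f w)^2) * netNuV μ G z w
      ≤ (∑ i ∈ Finset.range m, ENNReal.ofReal (4 * (f (a i) - f (a (i+1)))^2)) * netNuV μ G z w :=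
        mul_le_mul_left hofreal _
    _ = ∑ i ∈ Finset.range m, ENNReal.ofReal (4 * (f (a i) - f (a (i+1)))^2) * netNuV μ G z w :=
        Finset.sum_mul _ _ _
    _ ≤ ∑ i ∈ Finset.range m, ENNReal.ofReal 4 * (CV L * L ^ 216) *
          (ENNReal.ofReal ((f ((E i).1 : G) - f ((E i).2 : G))^2) *
            netNuE μ G z ((E i).1 : G) ((E i).2 : G)) := Finset.sum_le_sum hedge
    _ ≤ ∑ i ∈ Finset.range 4, ENNReal.ofReal 4 * (CV L * L ^ 216) *
          (ENNReal.ofReal ((f ((E i).1 : G) - f ((E i).2 : G))^2) *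
            netNuE μ G z ((E i).1 : G) ((E i).2 : G)) :=
        Finset.sum_le_sum_of_subset (Finset.range_subset_range.2 hm4)

end Main

end NetAux


/-- Under local volume doubling: `Σ_{z∈A} V₄f(z)² ν_z ≤ c₁ Σ_{y,z∈A'} (f(y)-f(z))² ν_{yz}`
where `A' = {y : d_G(y,A) ≤ 4}`. -/
theorem net_oscillation_estimate {X : Type*} [MetricSpace X] [ConnectedSpace X]
    [CompleteSpace X] [LocallyCompactSpace X] [TopologicalSpace.SeparableSpace X]
    [MeasurableSpace X] [BorelSpace X] (μ : Measure X)
    (hgeo : IsGeodesicSpace X)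
    (hpos : ∀ (x : X) (r : ℝ), 0 < r → 0 < μ (Metric.ball x r))
    (hfin : ∀ (x : X) (r : ℝ), 0 < r → μ (Metric.ball x r) < ⊤)
    (C_L : ℝ) (hCL : 0 < C_L)
    (hVDloc : ∀ (x : X) (R : ℝ), 0 < R → R ≤ 1 →
      μ (Metric.ball x (2 * R)) ≤ ENNReal.ofReal C_L * μ (Metric.ball x R))
    (G : Set X) (hG : MaximalSeparated G)
    (z : X → X → X) (hzsymm : ∀ a b : X, z a b = z b a)
    (hz : ∀ x y : G, (netGraph G).Adj x y →
      dist (x : X) (z (x : X) (y : X)) = dist (x : X) (y : X) / 2 ∧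
        dist (z (x : X) (y : X)) (y : X) = dist (x : X) (y : X) / 2) :
    ∃ c₁ : ℝ, 0 < c₁ ∧ ∀ (f : G → ℝ), (∀ x : G, 0 ≤ f x) → ∀ A : Set G,
      (∑' w : A, ENNReal.ofReal ((netV G 4 f (w : G)) ^ 2) * netNuV μ G z (w : G)) ≤
        ENNReal.ofReal c₁ *
          ∑' y : {y : G | ∃ w ∈ A, (netGraph G).dist y w ≤ 4},
            ∑' w : {y : G | ∃ w ∈ A, (netGraph G).dist y w ≤ 4},
              ENNReal.ofReal ((f (y : G) - f (w : G)) ^ 2) *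
                netNuE μ G z (y : G) (w : G) := by
  classical
  obtain ⟨H, hsep, hdns⟩ := NetAux.exists_maximal_sep (X := X) (1/8) (by norm_num)
  set L : ℝ≥0∞ := ENNReal.ofReal C_L with hLdef
  have hLtop : L ≠ ⊤ := ENNReal.ofReal_ne_top
  have hdbl : NetAux.Dbl μ L := fun x R hR0 hR1 => hVDloc x R hR0 hR1
  have hL : 1 ≤ L := by
    obtain ⟨x0⟩ : Nonempty X := inferInstance
    have h1 : μ (Metric.ball x0 1) ≤ μ (Metric.ball x0 2) :=
      measure_mono (Metric.ball_subset_ball (by norm_num))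
    have h2 : μ (Metric.ball x0 2) ≤ L * μ (Metric.ball x0 1) := by
      have := hdbl x0 1 (by norm_num) (le_refl 1)
      norm_num at this
      exact this
    have h0 : μ (Metric.ball x0 1) ≠ 0 := (hpos x0 1 (by norm_num)).ne'
    have ht : μ (Metric.ball x0 1) ≠ ⊤ := (hfin x0 1 (by norm_num)).ne
    have h3 : 1 * μ (Metric.ball x0 1) ≤ L * μ (Metric.ball x0 1) := by
      rw [one_mul]
      exact le_trans h1 h2
    exact (ENNReal.mul_le_mul_iff_left h0 ht).1 h3
  have h13top : (L ^ 13 + 1 : ℝ≥0∞) ≠ ⊤ :=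
    ENNReal.add_ne_top.2 ⟨ENNReal.pow_ne_top hLtop, ENNReal.one_ne_top⟩
  -- uniform cardinality bound for graph balls of radius 4
  set M : ℕ := ⌊(((L ^ 13 + 1) ^ (⌈4*((3*((4:ℕ):ℝ)+1)+1)⌉₊) : ℝ≥0∞)).toReal⌋₊ with hM
  have hball4 : ∀ x : G, {y : G | (netGraph G).dist x y ≤ 4}.Finite ∧
      {y : G | (netGraph G).dist x y ≤ 4}.ncard ≤ M := by
    intro x
    obtain ⟨h1, h2⟩ := NetAux.graphBall hpos hfin hL hLtop hdbl hgeo hsep hdns hG x 4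
    refine ⟨h1, ?_⟩
    rw [hM]
    refine Nat.le_floor ?_
    have h3 := ENNReal.toReal_mono (ENNReal.pow_ne_top h13top) h2
    simpa using h3
  have hCVtop : NetAux.CV L ≠ ⊤ := by
    rw [NetAux.CV]
    exact ENNReal.mul_ne_top (ENNReal.pow_ne_top h13top)
      (ENNReal.mul_ne_top (ENNReal.pow_ne_top h13top)
        (ENNReal.mul_ne_top (ENNReal.pow_ne_top hLtop) hLtop))
  set c3 : ℝ≥0∞ := ENNReal.ofReal 4 * (NetAux.CV L * L ^ 216) with hc3
  have hc3top : c3 ≠ ⊤ :=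
    ENNReal.mul_ne_top ENNReal.ofReal_ne_top
      (ENNReal.mul_ne_top hCVtop (ENNReal.pow_ne_top hLtop))
  set cBig : ℝ≥0∞ := 4 * (c3 * (M : ℝ≥0∞)) with hcBig
  have hcBigtop : cBig ≠ ⊤ := by
    refine ENNReal.mul_ne_top (by simp) (ENNReal.mul_ne_top hc3top (by simp))
  refine ⟨max 1 cBig.toReal, lt_of_lt_of_le one_pos (le_max_left _ _), ?_⟩
  intro f hf A
  set Aset : Set G := {y : G | ∃ w ∈ A, (netGraph G).dist y w ≤ 4} with hAset
  have hkey : ∀ w : ↥A, ∃ E : ℕ → (↥Aset × ↥Aset),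
      (∀ i, (netGraph G).dist ((E i).1 : G) (w : G) ≤ 4) ∧
      ENNReal.ofReal ((netV G 4 f (w : G))^2) * netNuV μ G z (w : G) ≤
        ∑ i ∈ Finset.range 4, ENNReal.ofReal 4 * (NetAux.CV L * L ^ 216) *
          (ENNReal.ofReal ((f ((E i).1 : G) - f ((E i).2 : G))^2) *
            netNuE μ G z ((E i).1 : G) ((E i).2 : G)) := by
    intro w
    exact NetAux.key_point hpos hfin hL hLtop hdbl hgeo hsep hdns hG z hz f Aset (w : G)
      (fun y h => ⟨(w : G), w.2, h⟩)
  choose E hE1 hE2 using hkey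
  set t : (↥Aset × ↥Aset) → ℝ≥0∞ := fun pr =>
    ENNReal.ofReal ((f (pr.1 : G) - f (pr.2 : G))^2) * netNuE μ G z (pr.1 : G) (pr.2 : G)
    with htdef
  have hfib : ∀ i : ℕ, ∀ b : ↥Aset × ↥Aset,
      ((fun w : ↥A => E w i) ⁻¹' {b}).Finite ∧
        ((fun w : ↥A => E w i) ⁻¹' {b}).ncard ≤ M := by
    intro i b
    have hsub : (fun w : ↥A => (w : G)) '' ((fun w : ↥A => E w i) ⁻¹' {b})
        ⊆ {y : G | (netGraph G).dist (b.1 : G) y ≤ 4} := by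
      rintro _ ⟨w, hw, rfl⟩
      have h1 := hE1 w i
      have h2 : E w i = b := hw
      rw [h2] at h1
      exact h1
    have hinj : Set.InjOn (fun w : ↥A => (w : G)) ((fun w : ↥A => E w i) ⁻¹' {b}) :=
      Subtype.val_injective.injOn
    have hfin1 : ((fun w : ↥A => E w i) ⁻¹' {b}).Finite :=
      Set.Finite.of_finite_image ((hball4 b.1).1.subset hsub) hinj
    refine ⟨hfin1, ?_⟩
    calc ((fun w : ↥A => E w i) ⁻¹' {b}).ncard
        = ((fun w : ↥A => (w : G)) '' ((fun w : ↥A => E w i) ⁻¹' {b})).ncard :=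
          (Set.ncard_image_of_injOn hinj).symm
      _ ≤ {y : G | (netGraph G).dist (b.1 : G) y ≤ 4}.ncard :=
          Set.ncard_le_ncard hsub (hball4 b.1).1
      _ ≤ M := (hball4 b.1).2
  have hT : (∑' p : ↥Aset × ↥Aset, t p) =
      ∑' y : ↥Aset, ∑' w : ↥Aset, ENNReal.ofReal ((f (y : G) - f (w : G))^2) *
        netNuE μ G z (y : G) (w : G) := by
    rw [htdef]
    exact ENNReal.tsum_prod (f := fun y w : ↥Aset =>
      ENNReal.ofReal ((f (y : G) - f (w : G))^2) * netNuE μ G z (y : G) (w : G))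
  have hmain : (∑' w : ↥A, ENNReal.ofReal ((netV G 4 f (w : G))^2) * netNuV μ G z (w : G)) ≤
      cBig * ∑' p : ↥Aset × ↥Aset, t p := by
    calc (∑' w : ↥A, ENNReal.ofReal ((netV G 4 f (w : G))^2) * netNuV μ G z (w : G))
        ≤ ∑' w : ↥A, ∑ i ∈ Finset.range 4, c3 * t (E w i) := by
          refine ENNReal.tsum_le_tsum fun w => ?_
          refine le_trans (hE2 w) (le_of_eq ?_)
          refine Finset.sum_congr rfl fun i _ => ?_
          rw [hc3, htdef]
      _ = ∑ i ∈ Finset.range 4, ∑' w : ↥A, c3 * t (E w i) :=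
          Summable.tsum_finsetSum fun i _ => ENNReal.summable
      _ = ∑ i ∈ Finset.range 4, c3 * ∑' w : ↥A, t (E w i) :=
          Finset.sum_congr rfl fun i _ => ENNReal.tsum_mul_left
      _ ≤ ∑ i ∈ Finset.range 4, c3 * ((M : ℝ≥0∞) * ∑' p : ↥Aset × ↥Aset, t p) := by
          refine Finset.sum_le_sum fun i _ => ?_
          exact mul_le_mul_right (NetAux.tsum_comp_le t (fun w => E w i) M (hfib i)) _
      _ = 4 * (c3 * ((M : ℝ≥0∞) * ∑' p : ↥Aset × ↥Aset, t p)) := by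
          rw [Finset.sum_const, Finset.card_range, nsmul_eq_mul]
          norm_num
      _ = cBig * ∑' p : ↥Aset × ↥Aset, t p := by
          rw [hcBig]
          ring
  refine le_trans hmain ?_
  rw [hT]
  refine mul_le_mul_left ?_ _
  calc cBig = ENNReal.ofReal cBig.toReal := (ENNReal.ofReal_toReal hcBigtop).symm
    _ ≤ ENNReal.ofReal (max 1 cBig.toReal) := ENNReal.ofReal_le_ofReal (le_max_right _ _)
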